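/- Let (X,≼) be a Debreu upper separable partial order and let x, y ∈ X be incomparable (x ⋈ y). Then there exists a sequence (≼ₙ)ₙ≥₀ of partial orders on X with ≼₀ = ≼ and with ≼ₙ₊₁ extending ≼ₙ for all n ≥ 0, such that the limit ≼' = lim ≼ₙ is a Debreu separable linear extension of ≼ satisfying x ≼' y. -/
import Mathlib


/-- A binary relation is a partial order: reflexive, antisymmetric, transitive. -/
def IsPartialOrderRel {X : Type*} (r : X → X → Prop) : Prop :=
  (∀ x, r x x) ∧ (∀ x y, r x y → r y x → x = y) ∧ (∀ x y z, r x y → r y z → r x z)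

/-- `r'` extends `r`. -/
def RelExtends {X : Type*} (r r' : X → X → Prop) : Prop :=
  ∀ x y, r x y → r' x y

/-- `r` is total: any two elements are comparable. -/
def TotalRel {X : Type*} (r : X → X → Prop) : Prop :=
  ∀ x y, r x y ∨ r y x

/-- `r'` is a linear extension of `r`: a total partial order extending `r`. -/
def IsLinearExtension {X : Type*} (r r' : X → X → Prop) : Prop :=
  IsPartialOrderRel r' ∧ TotalRel r' ∧ RelExtends r r'

/-- `x` and `y` are incomparable with respect to `r`. -/
def Incomp {X : Type*} (r : X → X → Prop) (x y : X) : Prop :=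
  ¬ r x y ∧ ¬ r y x

/-- `D` is Debreu dense for `r`. -/
def DebreuDense {X : Type*} (r : X → X → Prop) (D : Set X) : Prop :=
  ∀ x y, r x y → ¬ r y x → ∃ d ∈ D, r x d ∧ r d y

/-- `(X, r)` is Debreu separable: it has a countable Debreu dense subset. -/
def DebreuSeparable {X : Type*} (r : X → X → Prop) : Prop :=
  ∃ D : Set X, D.Countable ∧ DebreuDense r D

/-- The limit of a sequence of binary relations. -/
def LimitRel {X : Type*} (r : ℕ → X → X → Prop) : X → X → Prop :=
  fun x y => ∃ n₀ : ℕ, ∀ n, n₀ ≤ n → r n x y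

/-- `(X, r)` is Debreu upper separable. -/
def DebreuUpperSeparable {X : Type*} (r : X → X → Prop) : Prop :=
  ∃ D : Set X, D.Countable ∧ DebreuDense r D ∧
    ∀ x y, Incomp r x y → ∃ d ∈ D, Incomp r x d ∧ r d y

open scoped Classical

lemma ite_nonneg' (p : Prop) [Decidable p] {t : ℝ} (ht : 0 ≤ t) :
    0 ≤ if p then t else 0 := by
  split
  · exact ht
  · exact le_refl 0

lemma ite_le' (p : Prop) [Decidable p] {t : ℝ} (ht : 0 ≤ t) :
    (if p then t else 0) ≤ t := by
  split
  · exact le_refl t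
  · exact ht

noncomputable def fsum (P : ℕ → Prop) : ℝ := ∑' k, if P k then ((1:ℝ)/4)^k else 0

lemma fsum_term_nonneg (P : ℕ → Prop) (k : ℕ) :
    0 ≤ (if P k then ((1:ℝ)/4)^k else 0) := by
  split
  · positivity
  · exact le_refl 0

lemma fsum_term_le (P : ℕ → Prop) (k : ℕ) :
    (if P k then ((1:ℝ)/4)^k else 0) ≤ ((1:ℝ)/4)^k := by
  split
  · exact le_refl _
  · positivity

lemma geom_summable : Summable (fun k => ((1:ℝ)/4)^k) :=
  summable_geometric_of_lt_one (by norm_num) (by norm_num)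

lemma fsum_summable (P : ℕ → Prop) :
    Summable (fun k => if P k then ((1:ℝ)/4)^k else 0) :=
  Summable.of_nonneg_of_le (fsum_term_nonneg P) (fsum_term_le P) geom_summable

lemma fsum_nonneg (P : ℕ → Prop) : 0 ≤ fsum P :=
  tsum_nonneg (fsum_term_nonneg P)

lemma fsum_le_two (P : ℕ → Prop) : fsum P ≤ 2 := by
  have h1 : fsum P ≤ ∑' k, ((1:ℝ)/4)^k :=
    Summable.tsum_le_tsum (fsum_term_le P) (fsum_summable P) geom_summable
  have h2 : ∑' k, ((1:ℝ)/4)^k = (1 - 1/4)⁻¹ :=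
    tsum_geometric_of_lt_one (by norm_num) (by norm_num)
  rw [h2] at h1; linarith

lemma fsum_mono {P Q : ℕ → Prop} (h : ∀ k, P k → Q k) : fsum P ≤ fsum Q := by
  apply Summable.tsum_le_tsum _ (fsum_summable P) (fsum_summable Q)
  intro k
  by_cases hp : P k
  · simp [hp, h k hp]
  · simp only [hp, if_false]
    exact fsum_term_nonneg Q k

lemma fsum_strict {P Q : ℕ → Prop} (h : ∀ k, P k → Q k) (m : ℕ) (hQ : Q m) (hP : ¬ P m) :
    fsum P < fsum Q := by
  have key : fsum Q = fsum P + fsum (fun k => Q k ∧ ¬ P k) := by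
    unfold fsum
    rw [← Summable.tsum_add (fsum_summable P) (fsum_summable _)]
    apply tsum_congr
    intro k
    by_cases hp : P k
    · simp [hp, h k hp]
    · by_cases hq : Q k <;> simp [hp, hq]
  have h2 : ((1:ℝ)/4)^m ≤ fsum (fun k => Q k ∧ ¬ P k) := by
    have h0 := Summable.le_tsum (fsum_summable (fun k => Q k ∧ ¬ P k)) m
        (fun j _ => fsum_term_nonneg (fun k => Q k ∧ ¬ P k) j)
    rw [if_pos (show Q m ∧ ¬ P m from ⟨hQ, hP⟩)] at h0
    exact h0
  have h3 : (0:ℝ) < ((1:ℝ)/4)^m := by positivity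
  linarith

set_option maxHeartbeats 1000000 in
lemma fsum_lt_of_min_diff {P Q : ℕ → Prop} (m : ℕ)
    (hagree : ∀ k, k < m → (P k ↔ Q k)) (hP : P m) (hQ : ¬ Q m) :
    fsum Q < fsum P := by
  have hsP := fsum_summable P
  have hsQ := fsum_summable Q
  have headeq : (∑ i ∈ Finset.range m, if P i then ((1:ℝ)/4)^i else 0)
      = ∑ i ∈ Finset.range m, if Q i then ((1:ℝ)/4)^i else 0 := by
    apply Finset.sum_congr rfl
    intro i hi
    have := hagree i (Finset.mem_range.mp hi)
    by_cases h : P i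
    · simp [h, this.mp h]
    · rw [if_neg h, if_neg (fun hq => h (this.mpr hq))]
  have splitP := Summable.sum_add_tsum_nat_add m hsP
  have splitQ := Summable.sum_add_tsum_nat_add m hsQ
  have hsP' : Summable (fun i => if P (i + m) then ((1:ℝ)/4)^(i+m) else 0) :=
    (summable_nat_add_iff m).2 hsP
  have hsQ' : Summable (fun i => if Q (i + m) then ((1:ℝ)/4)^(i+m) else 0) :=
    (summable_nat_add_iff m).2 hsQ
  have tailP : ((1:ℝ)/4)^m ≤ ∑' i, if P (i + m) then ((1:ℝ)/4)^(i+m) else 0 := by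
    have h0 := Summable.le_tsum hsP' 0 (fun j _ => ite_nonneg' _ (by positivity))
    simp only [zero_add] at h0
    rwa [if_pos hP] at h0
  have geomeq : (fun i : ℕ => ((1:ℝ)/4)^(i+1+m)) = fun i => ((1:ℝ)/4)^i * ((1:ℝ)/4)^(1+m) := by
    funext i
    rw [← pow_add, add_assoc]
  have hsgeom : Summable (fun i : ℕ => ((1:ℝ)/4)^(i+1+m)) := by
    rw [geomeq]
    exact geom_summable.mul_right _
  have hsQ'' : Summable (fun i => if Q (i+1+m) then ((1:ℝ)/4)^(i+1+m) else 0) :=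
    Summable.of_nonneg_of_le (fun i => ite_nonneg' _ (by positivity))
      (fun i => ite_le' _ (by positivity)) hsgeom
  have tailQ : (∑' i, if Q (i + m) then ((1:ℝ)/4)^(i+m) else 0) ≤ ((1:ℝ)/4)^m / 3 := by
    have e0 : (∑' i, if Q (i + m) then ((1:ℝ)/4)^(i+m) else 0)
        = (if Q (0 + m) then ((1:ℝ)/4)^(0+m) else 0)
          + ∑' i, if Q ((i+1) + m) then ((1:ℝ)/4)^((i+1)+m) else 0 :=
      Summable.tsum_eq_zero_add hsQ'
    have e1 : (∑' i, if Q (i+1+m) then ((1:ℝ)/4)^(i+1+m) else 0)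
        ≤ ∑' i, ((1:ℝ)/4)^(i+1+m) :=
      Summable.tsum_le_tsum (fun i => ite_le' _ (by positivity)) hsQ'' hsgeom
    have e2 : (∑' i : ℕ, ((1:ℝ)/4)^(i+1+m)) = (1 - 1/4)⁻¹ * ((1:ℝ)/4)^(1+m) := by
      rw [geomeq, tsum_mul_right, tsum_geometric_of_lt_one (by norm_num) (by norm_num)]
    have e3 : (1 - (1:ℝ)/4)⁻¹ * ((1:ℝ)/4)^(1+m) = ((1:ℝ)/4)^m / 3 := by
      rw [pow_add, pow_one]
      ring
    rw [e0, zero_add, if_neg hQ, zero_add]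
    calc (∑' i, if Q (i+1+m) then ((1:ℝ)/4)^(i+1+m) else 0)
        ≤ ∑' i, ((1:ℝ)/4)^(i+1+m) := e1
      _ = ((1:ℝ)/4)^m / 3 := by rw [e2, e3]
  have h3 : (0:ℝ) < ((1:ℝ)/4)^m := by positivity
  unfold fsum
  rw [← splitP, ← splitQ, ← headeq]
  linarith

lemma fsum_inj {P Q : ℕ → Prop} (h : fsum P = fsum Q) : ∀ k, P k ↔ Q k := by
  by_contra hc
  have hex : ∃ k, ¬ (P k ↔ Q k) := not_forall.mp hc
  classical
  let m := Nat.find hex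
  have hm : ¬ (P m ↔ Q m) := Nat.find_spec hex
  have hagree : ∀ k, k < m → (P k ↔ Q k) := by
    intro k hk
    by_contra hk'
    exact absurd (Nat.find_le hk' : m ≤ k) (not_le.mpr hk)
  by_cases hp : P m
  · have hq : ¬ Q m := fun hq => hm (iff_of_true hp hq)
    exact absurd h (ne_of_gt (fsum_lt_of_min_diff m hagree hp hq))
  · have hq : Q m := by
      by_contra hq
      exact hm (iff_of_false hp hq)
    exact absurd h (ne_of_lt (fsum_lt_of_min_diff m (fun k hk => (hagree k hk).symm) hq hp))

theorem debreuUpperSeparable_limit_debreuSeparable_linearExtension {X : Type*}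
    (r : X → X → Prop) (hr : IsPartialOrderRel r)
    (hsep : DebreuUpperSeparable r) (x y : X) (hxy : Incomp r x y) :
    ∃ S : ℕ → X → X → Prop,
      (∀ n, IsPartialOrderRel (S n)) ∧
      S 0 = r ∧
      (∀ n, RelExtends (S n) (S (n + 1))) ∧
      IsLinearExtension r (LimitRel S) ∧
      DebreuSeparable (LimitRel S) ∧
      LimitRel S x y := by
  classical
  obtain ⟨hrefl, hanti, htrans⟩ := hr
  obtain ⟨D, hDc, hDd, hDu⟩ := hsep
  obtain ⟨d₀, hd₀D, hd₀x, hd₀y⟩ := hDu x y hxy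
  obtain ⟨e, he⟩ := hDc.exists_eq_range ⟨d₀, hd₀D⟩
  -- the coding of elements by subsets of ℕ
  set C : X → ℕ → Prop :=
    fun z k => if Even k then r (e (k / 2)) z else ¬ r z (e (k / 2)) with hC
  have hCeven : ∀ z n, C z (2 * n) ↔ r (e n) z := by
    intro z n
    have h1 : Even (2 * n) := even_two_mul n
    have h2 : 2 * n / 2 = n := by omega
    rw [hC]
    simp only [h1, if_true, h2]
  have hCodd : ∀ z n, C z (2 * n + 1) ↔ ¬ r z (e n) := by
    intro z n
    have h1 : ¬ Even (2 * n + 1) := by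
      intro h
      rw [Nat.even_add_one] at h
      exact h (even_two_mul n)
    have h2 : (2 * n + 1) / 2 = n := by omega
    rw [hC]
    simp only [h1, if_false, h2]
  have hCmono : ∀ u v, r u v → ∀ k, C u k → C v k := by
    intro u v huv k
    rw [hC]
    by_cases hk : Even k
    · simp only [hk, if_true]
      exact fun h => htrans _ _ _ h huv
    · simp only [hk, if_false]
      exact fun h h' => h (htrans _ _ _ huv h')
  have hmemD : ∀ d, d ∈ D → ∃ n, e n = d := by
    intro d hd
    rw [he] at hd
    obtain ⟨n, hn⟩ := hd
    exact ⟨n, hn⟩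
  have hCstrict : ∀ u v, r u v → ¬ r v u → ∃ k, C v k ∧ ¬ C u k := by
    intro u v huv hvu
    obtain ⟨d, hdD, hud, hdv⟩ := hDd u v huv hvu
    obtain ⟨n, hn⟩ := hmemD d hdD
    by_cases hdu : r d u
    · have heq : u = d := hanti u d hud hdu
      refine ⟨2 * n + 1, ?_, ?_⟩
      · rw [hCodd v n, hn, ← heq]
        exact hvu
      · rw [hCodd u n, hn, ← heq]
        exact fun h => h (hrefl u)
    · refine ⟨2 * n, ?_, ?_⟩
      · rw [hCeven v n, hn]
        exact hdv
      · rw [hCeven u n, hn]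
        exact hdu
  have hCincomp : ∀ u v, Incomp r u v → ∃ k, C v k ∧ ¬ C u k := by
    intro u v huv
    obtain ⟨d, hdD, hud, hdv⟩ := hDu u v huv
    obtain ⟨n, hn⟩ := hmemD d hdD
    refine ⟨2 * n, ?_, ?_⟩
    · rw [hCeven v n, hn]
      exact hdv
    · rw [hCeven u n, hn]
      exact hud.2
  -- the injective monotone
  set G : X → ℝ := fun z => fsum (C z) + (if r d₀ z then 10 else 0) with hG
  have hGmono : ∀ u v, r u v → G u ≤ G v := by
    intro u v huv
    have h1 : fsum (C u) ≤ fsum (C v) := fsum_mono (hCmono u v huv)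
    have h2 : (if r d₀ u then (10:ℝ) else 0) ≤ (if r d₀ v then (10:ℝ) else 0) := by
      by_cases h : r d₀ u
      · rw [if_pos h, if_pos (htrans _ _ _ h huv)]
      · rw [if_neg h]
        split
        · norm_num
        · exact le_refl 0
    rw [hG]
    exact add_le_add h1 h2
  have hGstrict : ∀ u v, r u v → ¬ r v u → G u < G v := by
    intro u v huv hvu
    obtain ⟨k, h1, h2⟩ := hCstrict u v huv hvu
    have h3 : fsum (C u) < fsum (C v) := fsum_strict (hCmono u v huv) k h1 h2
    have h4 : (if r d₀ u then (10:ℝ) else 0) ≤ (if r d₀ v then (10:ℝ) else 0) := by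
      by_cases h : r d₀ u
      · rw [if_pos h, if_pos (htrans _ _ _ h huv)]
      · rw [if_neg h]
        split
        · norm_num
        · exact le_refl 0
    rw [hG]
    exact add_lt_add_of_lt_of_le h3 h4
  have hfs : ∀ u v, fsum (C u) = fsum (C v) → u = v := by
    intro u v huv
    have hiff := fsum_inj huv
    by_cases huv' : r u v
    · by_cases hvu' : r v u
      · exact hanti u v huv' hvu'
      · obtain ⟨k, h3, h4⟩ := hCstrict u v huv' hvu'
        exact absurd ((hiff k).mpr h3) h4
    · by_cases hvu' : r v u
      · obtain ⟨k, h3, h4⟩ := hCstrict v u hvu' huv'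
        exact absurd ((hiff k).mp h3) h4
      · obtain ⟨k, h3, h4⟩ := hCincomp u v ⟨huv', hvu'⟩
        exact absurd ((hiff k).mpr h3) h4
  have hGinj : ∀ u v, G u = G v → u = v := by
    intro u v huv
    rw [hG] at huv
    by_cases h1 : r d₀ u <;> by_cases h2 : r d₀ v
    · simp only [if_pos h1, if_pos h2, add_left_inj] at huv
      exact hfs u v huv
    · exfalso
      simp only [if_pos h1, if_neg h2] at huv
      have := fsum_nonneg (C u)
      have := fsum_le_two (C v)
      linarith
    · exfalso
      simp only [if_neg h1, if_pos h2] at huv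
      have := fsum_nonneg (C v)
      have := fsum_le_two (C u)
      linarith
    · simp only [if_neg h1, if_neg h2, add_zero] at huv
      exact hfs u v huv
  have hGxy : G x < G y := by
    rw [hG]
    simp only [if_pos hd₀y, if_neg hd₀x.2, add_zero]
    have := fsum_nonneg (C y)
    have := fsum_le_two (C x)
    linarith
  -- the linear extension
  set R : X → X → Prop := fun u v => u = v ∨ G u < G v with hR
  have hRpo : IsPartialOrderRel R := by
    refine ⟨fun u => Or.inl rfl, ?_, ?_⟩
    · rintro u v (rfl | h1) (h2 | h2)
      · rfl
      · rfl
      · exact h2.symm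
      · exact absurd h2 (lt_asymm h1)
    · rintro u v w (rfl | h1) (h2 | h2)
      · exact Or.inl h2
      · exact Or.inr h2
      · subst h2
        exact Or.inr h1
      · exact Or.inr (lt_trans h1 h2)
  have hRtot : TotalRel R := by
    intro u v
    rcases lt_trichotomy (G u) (G v) with h | h | h
    · exact Or.inl (Or.inr h)
    · exact Or.inl (Or.inl (hGinj u v h))
    · exact Or.inr (Or.inr h)
  have hRext : RelExtends r R := by
    intro u v huv
    by_cases heq : u = v
    · exact Or.inl heq
    · right
      by_cases hvu : r v u
      · exact absurd (hanti u v huv hvu) heq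
      · exact hGstrict u v huv hvu
  have hRxy : R x y := Or.inr hGxy
  -- Debreu separability of R
  set wfn : ℚ × ℚ → X := fun pq =>
    if h : ∃ z : X, (pq.1 : ℝ) < G z ∧ G z < (pq.2 : ℝ) then h.choose else x with hwfn
  set ufn : ℚ → X := fun q =>
    if h : ∃ z : X, G z < (q : ℝ) ∧ ∀ w, G w < (q : ℝ) → G w ≤ G z then h.choose else x
    with hufn
  set D' : Set X := Set.range wfn ∪ Set.range ufn with hD'
  have hD'c : D'.Countable :=
    (Set.countable_range wfn).union (Set.countable_range ufn)
  have hD'dense : DebreuDense R D' := by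
    intro u v huv hvu
    have hGuv : G u < G v := by
      rcases huv with rfl | h
      · exact absurd (Or.inl rfl : R u u) hvu
      · exact h
    by_cases hmid : ∃ z : X, G u < G z ∧ G z < G v
    · obtain ⟨z, hz1, hz2⟩ := hmid
      obtain ⟨p, hp1, hp2⟩ := exists_rat_btwn hz1
      obtain ⟨q, hq1, hq2⟩ := exists_rat_btwn hz2
      have hex : ∃ z' : X, ((p, q).1 : ℝ) < G z' ∧ G z' < ((p, q).2 : ℝ) := ⟨z, hp2, hq1⟩
      have hspec : ((p : ℝ)) < G (wfn (p, q)) ∧ G (wfn (p, q)) < (q : ℝ) := by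
        rw [hwfn]
        simp only
        rw [dif_pos hex]
        exact hex.choose_spec
      refine ⟨wfn (p, q), Or.inl ⟨(p, q), rfl⟩, Or.inr ?_, Or.inr ?_⟩
      · exact lt_trans hp1 hspec.1
      · exact lt_trans hspec.2 hq2
    · obtain ⟨q, hq1, hq2⟩ := exists_rat_btwn hGuv
      have humax : ∀ w, G w < (q : ℝ) → G w ≤ G u := by
        intro w hw
        by_contra hc
        push_neg at hc
        exact hmid ⟨w, hc, lt_trans hw hq2⟩
      have hex : ∃ z : X, G z < (q : ℝ) ∧ ∀ w, G w < (q : ℝ) → G w ≤ G z :=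
        ⟨u, hq1, humax⟩
      have hspec : G (ufn q) < (q : ℝ) ∧ ∀ w, G w < (q : ℝ) → G w ≤ G (ufn q) := by
        rw [hufn]
        simp only
        rw [dif_pos hex]
        exact hex.choose_spec
      have hle1 : G u ≤ G (ufn q) := hspec.2 u hq1
      have hle2 : G (ufn q) ≤ G u := humax _ hspec.1
      have heq : u = ufn q := hGinj u (ufn q) (le_antisymm hle1 hle2)
      refine ⟨ufn q, Or.inr ⟨q, rfl⟩, Or.inl heq, Or.inr ?_⟩
      rw [← heq]
      exact hGuv
  -- assemble the sequence
  have hlim : LimitRel (fun n => if n = 0 then r else R) = R := by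
    funext u v
    apply propext
    constructor
    · rintro ⟨n₀, h⟩
      have := h (n₀ + 1) (Nat.le_succ n₀)
      simpa using this
    · intro h
      exact ⟨1, fun n hn => by
        have hn0 : n ≠ 0 := by omega
        simp only [if_neg hn0]
        exact h⟩
  refine ⟨fun n => if n = 0 then r else R, ?_, ?_, ?_, ?_, ?_, ?_⟩
  · intro n
    by_cases hn : n = 0
    · simp only [hn, if_pos rfl]
      exact ⟨hrefl, hanti, htrans⟩
    · simp only [if_neg hn]
      exact hRpo
  · simp
  · intro n u v huv
    simp only [Nat.succ_ne_zero, if_neg, reduceIte]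
    by_cases hn : n = 0
    · rw [hn] at huv
      simp only [if_pos rfl] at huv
      exact hRext u v huv
    · simp only [if_neg hn] at huv
      exact huv
  · rw [hlim]
    exact ⟨hRpo, hRtot, hRext⟩
  · rw [hlim]
    exact ⟨D', hD'c, hD'dense⟩
  · rw [hlim]
    exact hRxy
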